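/- Let A ∈ ℝ^{d1×d2} and B ∈ ℝ^{d2×d3} have strictly positive entries, with d1, d2, d3 ≥ 2. Then R(AB) ≤ Φ(R(A), R(B)), where R(M) := max over i,j,k,ℓ of (m_{ik}·m_{jℓ})/(m_{iℓ}·m_{jk}) and Φ(α,β) := ((1+√(αβ))/(√α+√β))². -/

import Mathlib

lemma core (s t a b c d : ℝ) (hs : 1 ≤ s) (ht : 1 ≤ t)
    (ha : 0 ≤ a) (hb : 0 ≤ b) (hc : 0 ≤ c) (hd : 0 ≤ d) :
    (a + t^2*b + s^2*c + s^2*t^2*d) * (a+b+c+d) * (s+t)^2 ≤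
      (1+s*t)^2 * ((a+b+s^2*c+s^2*d) * (a+t^2*b+c+t^2*d)) := by
  have hu : (0:ℝ) ≤ s^2 - 1 := by nlinarith
  have hv : (0:ℝ) ≤ t^2 - 1 := by nlinarith
  have huv : (0:ℝ) ≤ (s^2-1)*(t^2-1) := mul_nonneg hu hv
  have f1 : (0:ℝ) ≤ (s^2-1)*(t^2-1)*(a - s*t*d)^2 := mul_nonneg huv (sq_nonneg _)
  have f2 : (0:ℝ) ≤ (s^2-1)*(t^2-1)*(t^2*b^2) := mul_nonneg huv (by positivity)
  have f3 : (0:ℝ) ≤ (s^2-1)*(t^2-1)*(s^2*c^2) := mul_nonneg huv (by positivity)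
  have f4 : (0:ℝ) ≤ (s^2-1)*(t^2-1)*((t^2+1)*(a*b)) := by positivity
  have f5 : (0:ℝ) ≤ (s^2-1)*(t^2-1)*((s^2+1)*(a*c)) := by positivity
  have f6 : (0:ℝ) ≤ (s^2-1)*(t^2-1)*((s^2*t^2+(s+t)^2+1)*(b*c)) := by positivity
  have f7 : (0:ℝ) ≤ (s^2-1)*(t^2-1)*(s^2*(t^2+1)*(c*d)) := by positivity
  have f8 : (0:ℝ) ≤ (s^2-1)*(t^2-1)*(t^2*(s^2+1)*(b*d)) := by positivity
  have E : (1+s*t)^2 * ((a+b+s^2*c+s^2*d) * (a+t^2*b+c+t^2*d))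
      - (a + t^2*b + s^2*c + s^2*t^2*d) * (a+b+c+d) * (s+t)^2
      = (s^2-1)*(t^2-1)*(a - s*t*d)^2 + (s^2-1)*(t^2-1)*(t^2*b^2)
        + (s^2-1)*(t^2-1)*(s^2*c^2) + (s^2-1)*(t^2-1)*((t^2+1)*(a*b))
        + (s^2-1)*(t^2-1)*((s^2+1)*(a*c))
        + (s^2-1)*(t^2-1)*((s^2*t^2+(s+t)^2+1)*(b*c))
        + (s^2-1)*(t^2-1)*(s^2*(t^2+1)*(c*d))
        + (s^2-1)*(t^2-1)*(t^2*(s^2+1)*(b*d)) := by ring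
  linarith

lemma phi_mono (s t s' t' : ℝ) (h1 : 1 ≤ s) (h2 : 1 ≤ t) (hs : s ≤ s') (ht : t ≤ t') :
    (1 + s*t)/(s+t) ≤ (1 + s'*t')/(s'+t') := by
  have h1' : 1 ≤ s' := h1.trans hs
  have h2' : 1 ≤ t' := h2.trans ht
  have step1 : (1 + s*t)/(s+t) ≤ (1 + s'*t)/(s'+t) := by
    rw [div_le_div_iff₀ (by linarith) (by linarith)]
    nlinarith [mul_nonneg (sub_nonneg.2 hs) (sub_nonneg.2 (by nlinarith : (1:ℝ) ≤ t^2))]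
  have step2 : (1 + s'*t)/(s'+t) ≤ (1 + s'*t')/(s'+t') := by
    rw [div_le_div_iff₀ (by linarith) (by linarith)]
    nlinarith [mul_nonneg (sub_nonneg.2 ht) (sub_nonneg.2 (by nlinarith : (1:ℝ) ≤ s'^2))]
  linarith


open Finset in
lemma dot_ineq {n : ℕ} [Nonempty (Fin n)] (u v x y : Fin n → ℝ) (m p s t : ℝ)
    (hm : 0 < m) (hp : 0 < p) (hs : 1 ≤ s) (ht : 1 ≤ t)
    (hv : ∀ i, 0 < v i) (hy : ∀ i, 0 < y i)
    (hum : ∀ i, m * v i ≤ u i) (huM : ∀ i, u i ≤ m * s^2 * v i)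
    (hxp : ∀ i, p * y i ≤ x i) (hxP : ∀ i, x i ≤ p * t^2 * y i)
    (core : ∀ a b c d : ℝ, 0 ≤ a → 0 ≤ b → 0 ≤ c → 0 ≤ d →
      (a + t^2*b + s^2*c + s^2*t^2*d) * (a+b+c+d) * (s+t)^2 ≤
        (1+s*t)^2 * ((a+b+s^2*c+s^2*d) * (a+t^2*b+c+t^2*d))) :
    (∑ i, u i * x i) * (∑ i, v i * y i) * (s+t)^2 ≤
      (1+s*t)^2 * ((∑ i, u i * y i) * (∑ i, v i * x i)) := by
  rcases eq_or_lt_of_le hs with hs1 | hs1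
  · -- s = 1 : u = m v
    have hu : ∀ i, u i = m * v i := fun i =>
      le_antisymm (by have := huM i; rw [← hs1] at this; linarith) (hum i)
    have e1 : (∑ i, u i * x i) = m * ∑ i, v i * x i := by
      rw [mul_sum]; exact Finset.sum_congr rfl fun i _ => by rw [hu i]; ring
    have e2 : (∑ i, u i * y i) = m * ∑ i, v i * y i := by
      rw [mul_sum]; exact Finset.sum_congr rfl fun i _ => by rw [hu i]; ring
    rw [e1, e2]; ring_nf; rw [← hs1]; ring_nf; rfl
  rcases eq_or_lt_of_le ht with ht1 | ht1
  · have hx : ∀ i, x i = p * y i := fun i =>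
      le_antisymm (by have := hxP i; rw [← ht1] at this; linarith) (hxp i)
    have e1 : (∑ i, u i * x i) = p * ∑ i, u i * y i := by
      rw [mul_sum]; exact Finset.sum_congr rfl fun i _ => by rw [hx i]; ring
    have e2 : (∑ i, v i * x i) = p * ∑ i, v i * y i := by
      rw [mul_sum]; exact Finset.sum_congr rfl fun i _ => by rw [hx i]; ring
    rw [e1, e2]; ring_nf; rw [← ht1]; ring_nf; rfl
  -- main case
  set a : ℝ := ∑ i, (m*s^2*v i - u i) * (p*t^2*y i - x i) with ha_def
  set b : ℝ := ∑ i, (m*s^2*v i - u i) * (x i - p*y i) with hb_def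
  set c : ℝ := ∑ i, (u i - m*v i) * (p*t^2*y i - x i) with hc_def
  set d : ℝ := ∑ i, (u i - m*v i) * (x i - p*y i) with hd_def
  have ha : 0 ≤ a := Finset.sum_nonneg fun i _ =>
    mul_nonneg (by linarith [huM i]) (by linarith [hxP i])
  have hb : 0 ≤ b := Finset.sum_nonneg fun i _ =>
    mul_nonneg (by linarith [huM i]) (by linarith [hxp i])
  have hc : 0 ≤ c := Finset.sum_nonneg fun i _ =>
    mul_nonneg (by linarith [hum i]) (by linarith [hxP i])
  have hd : 0 ≤ d := Finset.sum_nonneg fun i _ =>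
    mul_nonneg (by linarith [hum i]) (by linarith [hxp i])
  have hX : (s^2-1)*(t^2-1) * ∑ i, u i * x i = a + t^2*b + s^2*c + s^2*t^2*d := by
    rw [ha_def, hb_def, hc_def, hd_def]
    simp only [Finset.mul_sum, ← Finset.sum_add_distrib]
    exact Finset.sum_congr rfl fun i _ => by ring
  have hY : m*p*((s^2-1)*(t^2-1)) * ∑ i, v i * y i = a + b + c + d := by
    rw [ha_def, hb_def, hc_def, hd_def]
    simp only [Finset.mul_sum, ← Finset.sum_add_distrib]
    exact Finset.sum_congr rfl fun i _ => by ring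
  have hZ : p*((s^2-1)*(t^2-1)) * ∑ i, u i * y i = a + b + s^2*c + s^2*d := by
    rw [ha_def, hb_def, hc_def, hd_def]
    simp only [Finset.mul_sum, ← Finset.sum_add_distrib]
    exact Finset.sum_congr rfl fun i _ => by ring
  have hW : m*((s^2-1)*(t^2-1)) * ∑ i, v i * x i = a + t^2*b + c + t^2*d := by
    rw [ha_def, hb_def, hc_def, hd_def]
    simp only [Finset.mul_sum, ← Finset.sum_add_distrib]
    exact Finset.sum_congr rfl fun i _ => by ring
  have key := core a b c d ha hb hc hd
  have hK : 0 < m*p*((s^2-1)*(t^2-1))^2 := by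
    apply mul_pos (mul_pos hm hp)
    apply pow_pos (mul_pos (by nlinarith) (by nlinarith))
  rw [← mul_le_mul_iff_right₀ hK]
  have e1 : m*p*((s^2-1)*(t^2-1))^2 * ((∑ i, u i * x i) * (∑ i, v i * y i) * (s+t)^2)
      = ((s^2-1)*(t^2-1) * ∑ i, u i * x i) * (m*p*((s^2-1)*(t^2-1)) * ∑ i, v i * y i) * (s+t)^2 := by
    ring
  have e2 : m*p*((s^2-1)*(t^2-1))^2 * ((1+s*t)^2 * ((∑ i, u i * y i) * (∑ i, v i * x i)))
      = (1+s*t)^2 * ((p*((s^2-1)*(t^2-1)) * ∑ i, u i * y i) * (m*((s^2-1)*(t^2-1)) * ∑ i, v i * x i)) := by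
    ring
  rw [e1, e2, hX, hY, hZ, hW]
  exact key

noncomputable def Rdist {m n : ℕ} (A : Matrix (Fin m) (Fin n) ℝ) : ℝ :=
  ⨆ i, ⨆ j, ⨆ k, ⨆ l, A i k * A j l / (A i l * A j k)

lemma bdd_fin {N : ℕ} (f : Fin N → ℝ) : BddAbove (Set.range f) :=
  (Set.finite_range f).bddAbove

lemma crossratio_le_Rdist {m n : ℕ} (M : Matrix (Fin m) (Fin n) ℝ)
    (i j : Fin m) (k l : Fin n) :
    M i k * M j l / (M i l * M j k) ≤ Rdist M := by
  refine le_ciSup_of_le (bdd_fin _) i ?_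
  refine le_ciSup_of_le (bdd_fin _) j ?_
  refine le_ciSup_of_le (bdd_fin _) k ?_
  exact le_ciSup (bdd_fin fun l => M i k * M j l / (M i l * M j k)) l

lemma Rdist_ge_one {m n : ℕ} [Nonempty (Fin m)] [Nonempty (Fin n)]
    (M : Matrix (Fin m) (Fin n) ℝ) (hM : ∀ i j, 0 < M i j) :
    (1:ℝ) ≤ Rdist M := by
  obtain ⟨i⟩ := ‹Nonempty (Fin m)›
  obtain ⟨k⟩ := ‹Nonempty (Fin n)›
  have := crossratio_le_Rdist M i i k k
  rwa [div_self (mul_pos (hM i k) (hM i k)).ne'] at this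

theorem stmt15 (d1 d2 d3 : ℕ) (h1 : 2 ≤ d1) (h2 : 2 ≤ d2) (h3 : 2 ≤ d3)
    (A : Matrix (Fin d1) (Fin d2) ℝ) (B : Matrix (Fin d2) (Fin d3) ℝ)
    (hA : ∀ i j, 0 < A i j) (hB : ∀ i j, 0 < B i j) :
    Rdist (A * B) ≤
      ((1 + Real.sqrt (Rdist A * Rdist B)) /
        (Real.sqrt (Rdist A) + Real.sqrt (Rdist B))) ^ 2 := by
  haveI : Nonempty (Fin d1) := ⟨⟨0, by omega⟩⟩
  haveI : Nonempty (Fin d2) := ⟨⟨0, by omega⟩⟩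
  haveI : Nonempty (Fin d3) := ⟨⟨0, by omega⟩⟩
  have hRA1 : (1:ℝ) ≤ Rdist A := Rdist_ge_one A hA
  have hRB1 : (1:ℝ) ≤ Rdist B := Rdist_ge_one B hB
  have hsA1 : (1:ℝ) ≤ Real.sqrt (Rdist A) := by
    rw [show (1:ℝ) = Real.sqrt 1 from Real.sqrt_one.symm]
    exact Real.sqrt_le_sqrt hRA1
  have hsB1 : (1:ℝ) ≤ Real.sqrt (Rdist B) := by
    rw [show (1:ℝ) = Real.sqrt 1 from Real.sqrt_one.symm]
    exact Real.sqrt_le_sqrt hRB1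
  rw [Real.sqrt_mul (by linarith)]
  unfold Rdist
  refine ciSup_le fun i => ciSup_le fun j => ciSup_le fun k => ciSup_le fun l => ?_
  -- vectors
  set u : Fin d2 → ℝ := fun s => A i s with hu_def
  set v : Fin d2 → ℝ := fun s => A j s with hv_def
  set x : Fin d2 → ℝ := fun s => B s k with hx_def
  set y : Fin d2 → ℝ := fun s => B s l with hy_def
  have hu : ∀ s, 0 < u s := fun s => hA i s
  have hv : ∀ s, 0 < v s := fun s => hA j s
  have hx : ∀ s, 0 < x s := fun s => hB s k
  have hy : ∀ s, 0 < y s := fun s => hB s l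
  obtain ⟨sm, hsm⟩ := Finite.exists_min (fun s => u s / v s)
  obtain ⟨sM, hsM⟩ := Finite.exists_max (fun s => u s / v s)
  obtain ⟨sp, hsp⟩ := Finite.exists_min (fun s => x s / y s)
  obtain ⟨sP, hsP⟩ := Finite.exists_max (fun s => x s / y s)
  set m : ℝ := u sm / v sm with hm_def
  set M : ℝ := u sM / v sM with hM_def
  set p : ℝ := x sp / y sp with hp_def
  set P : ℝ := x sP / y sP with hP_def
  have hm : 0 < m := div_pos (hu sm) (hv sm)
  have hp : 0 < p := div_pos (hx sp) (hy sp)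
  have hMm : 1 ≤ M / m := (one_le_div hm).2 (hsm sM)
  have hPp : 1 ≤ P / p := (one_le_div hp).2 (hsp sP)
  set s : ℝ := Real.sqrt (M / m) with hs_def
  set t : ℝ := Real.sqrt (P / p) with ht_def
  have hs : 1 ≤ s := by
    rw [hs_def, show (1:ℝ) = Real.sqrt 1 from Real.sqrt_one.symm]
    exact Real.sqrt_le_sqrt hMm
  have ht : 1 ≤ t := by
    rw [ht_def, show (1:ℝ) = Real.sqrt 1 from Real.sqrt_one.symm]
    exact Real.sqrt_le_sqrt hPp
  have hs2 : m * s ^ 2 = M := by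
    rw [hs_def, Real.sq_sqrt (by linarith)]
    field_simp
  have ht2 : p * t ^ 2 = P := by
    rw [ht_def, Real.sq_sqrt (by linarith)]
    field_simp
  -- bounds relating to Rdist
  have hMRA : M / m ≤ Rdist A := by
    have e : M / m = A i sM * A j sm / (A i sm * A j sM) := by
      rw [hM_def, hm_def, hu_def, hv_def]
      field_simp
      try ring
    rw [e]; exact crossratio_le_Rdist A i j sM sm
  have hPRB : P / p ≤ Rdist B := by
    have e : P / p = B sP k * B sp l / (B sP l * B sp k) := by
      rw [hP_def, hp_def, hx_def, hy_def]
      field_simp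
      try ring
    rw [e]; exact crossratio_le_Rdist B sP sp k l
  have hsRA : s ≤ Real.sqrt (Rdist A) := Real.sqrt_le_sqrt hMRA
  have htRB : t ≤ Real.sqrt (Rdist B) := Real.sqrt_le_sqrt hPRB
  -- pointwise bounds
  have hum : ∀ s', m * v s' ≤ u s' := fun s' =>
    (le_div_iff₀ (hv s')).1 (hsm s')
  have huM : ∀ s', u s' ≤ m * s ^ 2 * v s' := fun s' => by
    rw [hs2]; exact (div_le_iff₀ (hv s')).1 (hsM s')
  have hxp : ∀ s', p * y s' ≤ x s' := fun s' =>
    (le_div_iff₀ (hy s')).1 (hsp s')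
  have hxP : ∀ s', x s' ≤ p * t ^ 2 * y s' := fun s' => by
    rw [ht2]; exact (div_le_iff₀ (hy s')).1 (hsP s')
  have main := dot_ineq u v x y m p s t hm hp hs ht hv hy hum huM hxp hxP
    (fun a b c d ha hb hc hd => core s t a b c d hs ht ha hb hc hd)
  -- rewrite matrix entries as sums
  simp only [Matrix.mul_apply]
  have hZW : 0 < (∑ s', A i s' * B s' l) * (∑ s', A j s' * B s' k) :=
    mul_pos (Finset.sum_pos (fun s' _ => mul_pos (hA i s') (hB s' l)) Finset.univ_nonempty)
      (Finset.sum_pos (fun s' _ => mul_pos (hA j s') (hB s' k)) Finset.univ_nonempty)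
  rw [div_le_iff₀ hZW]
  have hXY : (∑ s', A i s' * B s' k) = ∑ s', u s' * x s' := rfl
  have e2 : (∑ s', A j s' * B s' l) = ∑ s', v s' * y s' := rfl
  have e3 : (∑ s', A i s' * B s' l) = ∑ s', u s' * y s' := rfl
  have e4 : (∑ s', A j s' * B s' k) = ∑ s', v s' * x s' := rfl
  rw [hXY, e2, e3, e4]
  have hst : (0:ℝ) < s + t := by linarith
  have h1 : (∑ s', u s' * x s') * (∑ s', v s' * y s') ≤
      ((1 + s*t)/(s+t))^2 * ((∑ s', u s' * y s') * (∑ s', v s' * x s')) := by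
    rw [div_pow, div_mul_eq_mul_div, le_div_iff₀ (pow_pos hst 2)]
    exact main
  have h2 : ((1 + s*t)/(s+t))^2 ≤
      ((1 + Real.sqrt (Rdist A) * Real.sqrt (Rdist B)) /
        (Real.sqrt (Rdist A) + Real.sqrt (Rdist B)))^2 := by
    apply pow_le_pow_left₀ (by positivity)
    exact phi_mono s t _ _ hs ht hsRA htRB
  calc (∑ s', u s' * x s') * (∑ s', v s' * y s')
      ≤ ((1 + s*t)/(s+t))^2 * ((∑ s', u s' * y s') * (∑ s', v s' * x s')) := h1
    _ ≤ _ := by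
        apply mul_le_mul_of_nonneg_right h2
        rw [e3, e4] at hZW
        exact hZW.le
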